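/- Let N ≤ L, d ≤ N, P > 0. Let H ∈ ℂ^{N×L} be written H^H = F·C with F ∈ ℂ^{L×N} truncated unitary and C invertible; let F̂ ∈ ℂ^{L×N}, Ũ ∈ ℂ^{N×d}, V ∈ ℂ^{L×m} be truncated unitary with Ũ^H F̂^H V = 0, and set G = C^{-1} F^H F̂ Ũ and Q_I = G^H H V V^H H^H G. Then for every Hermitian positive semidefinite Q_S ∈ ℂ^{d×d}, the rates R_p = log det(I_d + (P/d)Q_S) and R_q = log det(I_d + (P/d)(Q_S + Q_I)) − log det(I_d + (P/d)Q_I) satisfy R_q ≥ R_p − d·log(1 + 2(P/d)·d_c²(F̂, F)). -/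

import Mathlib

open Matrix
open scoped ComplexOrder

/-- Squared Frobenius norm of a complex matrix. -/
noncomputable def frobNormSq {m n : Type*} [Fintype m] [Fintype n]
    (A : Matrix m n ℂ) : ℝ :=
  ∑ i, ∑ j, ‖A i j‖ ^ 2

/-- Squared chordal distance: `d_c(X,Y)² = (1/2) ‖X Xᴴ − Y Yᴴ‖_F²`. -/
noncomputable def chordalDistSq {L N : ℕ} (X Y : Matrix (Fin L) (Fin N) ℂ) : ℝ :=
  (1 / 2) * frobNormSq (X * Xᴴ - Y * Yᴴ)

lemma frobNormSq_nonneg {m n : Type*} [Fintype m] [Fintype n] (A : Matrix m n ℂ) :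
    0 ≤ frobNormSq A := by
  unfold frobNormSq; positivity

lemma trace_conjTranspose_mul_self (m n : Type*) [Fintype m] [Fintype n]
    (A : Matrix m n ℂ) : (Aᴴ * A).trace = (frobNormSq A : ℂ) := by
  simp only [Matrix.trace, Matrix.diag, Matrix.mul_apply, Matrix.conjTranspose_apply,
    frobNormSq]
  push_cast
  rw [Finset.sum_comm]
  congr 1; ext i; congr 1; ext j
  calc star (A i j) * A i j = ((Complex.normSq (A i j) : ℝ) : ℂ) := by
        rw [Complex.star_def, mul_comm, Complex.mul_conj]
    _ = (‖A i j‖ : ℂ) ^ 2 := by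
        rw [Complex.normSq_eq_norm_sq]; push_cast; ring

lemma frobNormSq_conjTranspose {m n : Type*} [Fintype m] [Fintype n] (A : Matrix m n ℂ) :
    frobNormSq Aᴴ = frobNormSq A := by
  unfold frobNormSq
  rw [Finset.sum_comm]
  simp [Matrix.conjTranspose_apply]

lemma frobNormSq_neg {m n : Type*} [Fintype m] [Fintype n] (A : Matrix m n ℂ) :
    frobNormSq (-A) = frobNormSq A := by
  simp [frobNormSq]

lemma frobNormSq_coisometry_mul {d L n : Type*} [Fintype d] [Fintype L] [Fintype n]
    [DecidableEq L] [DecidableEq d] (K : Matrix d L ℂ) (hK : K * Kᴴ = 1) (B : Matrix L n ℂ) :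
    frobNormSq (K * B) ≤ frobNormSq B := by
  set Pm : Matrix L L ℂ := 1 - Kᴴ * K with hPm
  have hPh : Pmᴴ = Pm := by
    simp [hPm, conjTranspose_sub, conjTranspose_mul]
  have hKK : Kᴴ * K * (Kᴴ * K) = Kᴴ * K := by
    rw [Matrix.mul_assoc Kᴴ K (Kᴴ * K), ← Matrix.mul_assoc K Kᴴ K, hK, Matrix.one_mul]
  have hP2 : Pm * Pm = Pm := by
    simp only [hPm, sub_mul, mul_sub, one_mul, mul_one, hKK]
    abel
  have hdecomp : Bᴴ * B = (K * B)ᴴ * (K * B) + (Pm * B)ᴴ * (Pm * B) := by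
    have h1 : (K * B)ᴴ * (K * B) = Bᴴ * (Kᴴ * K * B) := by
      simp only [conjTranspose_mul, Matrix.mul_assoc]
    have h2 : (Pm * B)ᴴ * (Pm * B) = Bᴴ * (Pm * B) := by
      rw [conjTranspose_mul, hPh, Matrix.mul_assoc, ← Matrix.mul_assoc Pm Pm B, hP2]
    rw [h1, h2, ← Matrix.mul_add]
    congr 1
    rw [← Matrix.add_mul]
    simp [hPm]
  have key : (frobNormSq B : ℂ) = (frobNormSq (K * B) : ℂ) + (frobNormSq (Pm * B) : ℂ) := by
    rw [← trace_conjTranspose_mul_self, ← trace_conjTranspose_mul_self,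
      ← trace_conjTranspose_mul_self, hdecomp, Matrix.trace_add]
  have keyR : frobNormSq B = frobNormSq (K * B) + frobNormSq (Pm * B) := by
    exact_mod_cast key
  have := frobNormSq_nonneg (Pm * B)
  linarith

lemma frobNormSq_mul_isometry {n L m : Type*} [Fintype n] [Fintype L] [Fintype m]
    [DecidableEq L] [DecidableEq m] (B : Matrix n L ℂ) (V : Matrix L m ℂ) (hV : Vᴴ * V = 1) :
    frobNormSq (B * V) ≤ frobNormSq B := by
  have h := frobNormSq_coisometry_mul (K := Vᴴ) (by rw [conjTranspose_conjTranspose]; exact hV) Bᴴ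
  calc frobNormSq (B * V) = frobNormSq ((B * V)ᴴ) := (frobNormSq_conjTranspose _).symm
    _ = frobNormSq (Vᴴ * Bᴴ) := by rw [conjTranspose_mul]
    _ ≤ frobNormSq Bᴴ := h
    _ = frobNormSq B := frobNormSq_conjTranspose _

lemma det_one_add_smul_herm {k : ℕ} {M : Matrix (Fin k) (Fin k) ℂ} (hM : M.IsHermitian)
    (c : ℝ) :
    (1 + (c : ℂ) • M).det = ((∏ i, (1 + c * hM.eigenvalues i) : ℝ) : ℂ) := by
  have hW : (hM.eigenvectorUnitary : Matrix (Fin k) (Fin k) ℂ) *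
      (star hM.eigenvectorUnitary : Matrix (Fin k) (Fin k) ℂ) = 1 :=
    Matrix.mem_unitaryGroup_iff.mp hM.eigenvectorUnitary.2
  set W := (hM.eigenvectorUnitary : Matrix (Fin k) (Fin k) ℂ)
  set D : Matrix (Fin k) (Fin k) ℂ := Matrix.diagonal (RCLike.ofReal ∘ hM.eigenvalues)
  have key : (1 : Matrix (Fin k) (Fin k) ℂ) + (c : ℂ) • M = W * (1 + (c : ℂ) • D) * star W := by
    have hsp : M = W * D * star W := hM.spectral_theorem
    rw [Matrix.mul_add, Matrix.add_mul, Matrix.mul_one, hW, Matrix.mul_smul, Matrix.smul_mul, ← hsp]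
  rw [key, Matrix.det_mul_right_comm, hW, Matrix.one_mul]
  have : (1 : Matrix (Fin k) (Fin k) ℂ) + (c : ℂ) • D =
      Matrix.diagonal (fun i => 1 + (c : ℂ) * (hM.eigenvalues i : ℂ)) := by
    rw [← Matrix.diagonal_one, ← Matrix.diagonal_smul, ← Matrix.diagonal_add]
    congr 1
  rw [this, Matrix.det_diagonal]
  push_cast
  rfl

lemma trace_eq_sum_eigen {k : ℕ} {M : Matrix (Fin k) (Fin k) ℂ} (hM : M.IsHermitian) :
    M.trace = ((∑ i, hM.eigenvalues i : ℝ) : ℂ) := by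
  have hW' : (star hM.eigenvectorUnitary : Matrix (Fin k) (Fin k) ℂ) *
      (hM.eigenvectorUnitary : Matrix (Fin k) (Fin k) ℂ) = 1 :=
    Matrix.mem_unitaryGroup_iff'.mp hM.eigenvectorUnitary.2
  conv_lhs => rw [hM.spectral_theorem, Unitary.conjStarAlgAut_apply]
  rw [Matrix.trace_mul_comm, ← Matrix.mul_assoc, hW', Matrix.one_mul, Matrix.trace_diagonal]
  push_cast
  rfl

lemma eig_le_reTrace {k : ℕ} {M : Matrix (Fin k) (Fin k) ℂ} (hM : M.PosSemidef) (i : Fin k) :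
    hM.1.eigenvalues i ≤ (M.trace).re := by
  have ht : M.trace = ((∑ j, hM.1.eigenvalues j : ℝ) : ℂ) := trace_eq_sum_eigen hM.1
  rw [ht, Complex.ofReal_re]
  exact Finset.single_le_sum (fun j _ => hM.eigenvalues_nonneg j) (Finset.mem_univ i)

lemma psd_real_smul {k : ℕ} {M : Matrix (Fin k) (Fin k) ℂ} (hM : M.PosSemidef)
    {c : ℝ} (hc : 0 ≤ c) : ((c : ℂ) • M).PosSemidef := by
  exact hM.smul (Complex.zero_le_real.mpr hc)

open scoped MatrixOrder

lemma abs_det_le_abs_det_add_psd {k : ℕ} {A B : Matrix (Fin k) (Fin k) ℂ}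
    (hA : A.PosDef) (hB : B.PosSemidef) :
    ‖A.det‖ ≤ ‖(A + B).det‖ := by
  classical
  set S := CFC.sqrt A with hSdef
  have hSS : S * S = A := CFC.sqrt_mul_sqrt_self A hA.posSemidef.nonneg
  have hSherm : S.IsHermitian := (CFC.sqrt_nonneg A).posSemidef.1
  have hdetA : A.det = S.det * S.det := by rw [← hSS, Matrix.det_mul]
  have hdetA0 : A.det ≠ 0 := ne_of_gt hA.det_pos
  have hSdet : IsUnit S.det := by
    rw [isUnit_iff_ne_zero]
    intro h
    rw [hdetA, h, mul_zero] at hdetA0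
    exact hdetA0 rfl
  have hSl : S * S⁻¹ = 1 := Matrix.mul_nonsing_inv S hSdet
  have hSr : S⁻¹ * S = 1 := Matrix.nonsing_inv_mul S hSdet
  have hSinvh : (S⁻¹)ᴴ = S⁻¹ := hSherm.inv
  set M := S⁻¹ * B * S⁻¹ with hMdef
  have hMpsd : M.PosSemidef := by
    have := hB.conjTranspose_mul_mul_same S⁻¹
    rwa [hSinvh] at this
  have hiden : A + B = S * (1 + M) * S := by
    rw [Matrix.mul_add, Matrix.add_mul, Matrix.mul_one, hSS, hMdef]
    congr 1
    have h : S * (S⁻¹ * B * S⁻¹) * S = B := by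
      calc S * (S⁻¹ * B * S⁻¹) * S = S * (S⁻¹ * (B * (S⁻¹ * S))) := by
            simp only [Matrix.mul_assoc]
        _ = B := by rw [hSr, Matrix.mul_one, ← Matrix.mul_assoc, hSl, Matrix.one_mul]
    exact h.symm
  have hdet1M : (1 + M).det = ((∏ i, (1 + 1 * hMpsd.1.eigenvalues i) : ℝ) : ℂ) := by
    have := det_one_add_smul_herm hMpsd.1 1
    rwa [Complex.ofReal_one, one_smul] at this
  have hge1 : (1 : ℝ) ≤ ∏ i, (1 + 1 * hMpsd.1.eigenvalues i) := by
    calc (1 : ℝ) = ∏ _i : Fin k, (1 : ℝ) := by simp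
      _ ≤ ∏ i, (1 + 1 * hMpsd.1.eigenvalues i) := by
          apply Finset.prod_le_prod
          · intro i _; norm_num
          · intro i _; have := hMpsd.eigenvalues_nonneg i; linarith
  have habs : ‖(A + B).det‖
      = ‖A.det‖ * ‖(1 + M).det‖ := by
    rw [hiden, Matrix.det_mul, Matrix.det_mul, hdetA]
    rw [norm_mul, norm_mul, norm_mul]
    ring
  rw [habs, hdet1M, Complex.norm_real, Real.norm_eq_abs]
  nlinarith [norm_nonneg A.det, abs_of_nonneg (le_trans zero_le_one hge1)]

set_option maxHeartbeats 2000000 in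
/-- **Lemma 4.** With quantized alignment `Ũᴴ F̂ᴴ V = 0`, receive filter
`G = C⁻¹ Fᴴ F̂ Ũ` and residual interference covariance `Q_I = Gᴴ H V Vᴴ Hᴴ G`,
the achievable rate `R_q` loses at most `d log(1 + 2(P/d) d_c(F̂,F)²)` with
respect to the interference-free rate `R_p`. -/
theorem rate_loss_bounded_by_chordal_distance
    (N L d m : ℕ) (hNL : N ≤ L) (hdN : d ≤ N) (hd : 0 < d)
    (P : ℝ) (hP : 0 < P)
    (H : Matrix (Fin N) (Fin L) ℂ)
    (F : Matrix (Fin L) (Fin N) ℂ) (C : Matrix (Fin N) (Fin N) ℂ)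
    (hFC : Hᴴ = F * C) (hF : Fᴴ * F = 1) (hC : IsUnit C.det)
    (Fhat : Matrix (Fin L) (Fin N) ℂ) (hFhat : Fhatᴴ * Fhat = 1)
    (U : Matrix (Fin N) (Fin d) ℂ) (hU : Uᴴ * U = 1)
    (V : Matrix (Fin L) (Fin m) ℂ) (hV : Vᴴ * V = 1)
    (hIA : Uᴴ * Fhatᴴ * V = 0)
    (G : Matrix (Fin N) (Fin d) ℂ) (hG : G = C⁻¹ * Fᴴ * Fhat * U)
    (QI : Matrix (Fin d) (Fin d) ℂ) (hQI : QI = Gᴴ * H * V * Vᴴ * Hᴴ * G)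
    (QS : Matrix (Fin d) (Fin d) ℂ) (hQS : QS.PosSemidef) :
    Real.log ‖(1 + ((P / d : ℝ) : ℂ) • (QS + QI)).det‖
        - Real.log ‖(1 + ((P / d : ℝ) : ℂ) • QI).det‖
      ≥ Real.log ‖(1 + ((P / d : ℝ) : ℂ) • QS).det‖
        - d * Real.log (1 + 2 * (P / d) * chordalDistSq Fhat F) := by
  classical
  have hdR : (0 : ℝ) < (d : ℝ) := by exact_mod_cast hd
  set c : ℝ := P / d with hcdef
  have hc : 0 < c := div_pos hP hdR
  -- basic rewrites
  have hH : H = Cᴴ * Fᴴ := by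
    calc H = Hᴴᴴ := (conjTranspose_conjTranspose H).symm
      _ = (F * C)ᴴ := by rw [hFC]
      _ = Cᴴ * Fᴴ := by rw [conjTranspose_mul]
  set Δ : Matrix (Fin L) (Fin L) ℂ := F * Fᴴ - Fhat * Fhatᴴ with hΔ
  set Nm : Matrix (Fin d) (Fin m) ℂ := Gᴴ * H * V with hNm
  have hGH : Gᴴ * H = Uᴴ * (Fhatᴴ * (F * Fᴴ)) := by
    rw [hG, hH]
    simp only [conjTranspose_mul, conjTranspose_conjTranspose, Matrix.mul_assoc]
    rw [← Matrix.mul_assoc (C⁻¹)ᴴ Cᴴ Fᴴ, ← conjTranspose_mul, Matrix.mul_nonsing_inv C hC,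
      conjTranspose_one, Matrix.one_mul]
  have hzero : Uᴴ * Fhatᴴ * (Fhat * Fhatᴴ) * V = 0 := by
    calc Uᴴ * Fhatᴴ * (Fhat * Fhatᴴ) * V
        = Uᴴ * ((Fhatᴴ * Fhat) * (Fhatᴴ * V)) := by simp only [Matrix.mul_assoc]
      _ = Uᴴ * (Fhatᴴ * V) := by rw [hFhat, Matrix.one_mul]
      _ = Uᴴ * Fhatᴴ * V := by rw [Matrix.mul_assoc]
      _ = 0 := hIA
  have hNδ : Nm = Uᴴ * Fhatᴴ * Δ * V := by
    have hexp : Uᴴ * Fhatᴴ * Δ * V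
        = Uᴴ * (Fhatᴴ * (F * Fᴴ)) * V - Uᴴ * Fhatᴴ * (Fhat * Fhatᴴ) * V := by
      simp only [hΔ, Matrix.mul_sub, Matrix.sub_mul, Matrix.mul_assoc]
    rw [hexp, hzero, sub_zero, hNm, hGH]
  -- QI = Nm * Nmᴴ
  have hQIN : QI = Nm * Nmᴴ := by
    rw [hQI, hNm]
    simp only [conjTranspose_mul, conjTranspose_conjTranspose, Matrix.mul_assoc]
  have hQIpsd : QI.PosSemidef := by
    rw [hQIN]; exact Matrix.posSemidef_self_mul_conjTranspose Nm
  -- trace bound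
  have htrace : QI.trace = ((frobNormSq Nm : ℝ) : ℂ) := by
    rw [hQIN, Matrix.trace_mul_comm, trace_conjTranspose_mul_self]
  set s : ℝ := 2 * chordalDistSq Fhat F with hs
  have hs0 : 0 ≤ s := by
    have := frobNormSq_nonneg (Fhat * Fhatᴴ - F * Fᴴ)
    simp only [hs, chordalDistSq]
    linarith
  have hfrobN : frobNormSq Nm ≤ s := by
    have hK : (Uᴴ * Fhatᴴ) * (Uᴴ * Fhatᴴ)ᴴ = 1 := by
      calc (Uᴴ * Fhatᴴ) * (Uᴴ * Fhatᴴ)ᴴ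
          = Uᴴ * ((Fhatᴴ * Fhat) * U) := by
            simp only [conjTranspose_mul, conjTranspose_conjTranspose, Matrix.mul_assoc]
        _ = Uᴴ * U := by rw [hFhat, Matrix.one_mul]
        _ = 1 := hU
    have h1 : frobNormSq Nm ≤ frobNormSq (Δ * V) := by
      have : Nm = (Uᴴ * Fhatᴴ) * (Δ * V) := by
        rw [hNδ]; simp only [Matrix.mul_assoc]
      rw [this]
      exact frobNormSq_coisometry_mul _ hK _
    have h2 : frobNormSq (Δ * V) ≤ frobNormSq Δ := frobNormSq_mul_isometry _ _ hV
    have h3 : frobNormSq Δ = s := by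
      have hneg : Fhat * Fhatᴴ - F * Fᴴ = -Δ := by rw [hΔ]; abel
      simp only [hs, chordalDistSq, hneg, frobNormSq_neg]
      ring
    linarith
  -- eigenvalue bounds for QI
  have heigQI : ∀ i, hQIpsd.1.eigenvalues i ≤ s := by
    intro i
    have h1 := eig_le_reTrace hQIpsd i
    rw [htrace, Complex.ofReal_re] at h1
    linarith
  -- determinant formulas
  have hdetS : (1 + (c : ℂ) • QS).det = ((∏ i, (1 + c * hQS.1.eigenvalues i) : ℝ) : ℂ) :=
    det_one_add_smul_herm hQS.1 c
  have hdetI : (1 + (c : ℂ) • QI).det = ((∏ i, (1 + c * hQIpsd.1.eigenvalues i) : ℝ) : ℂ) :=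
    det_one_add_smul_herm hQIpsd.1 c
  set D0 : ℝ := ∏ i, (1 + c * hQS.1.eigenvalues i) with hD0def
  set D1 : ℝ := ∏ i, (1 + c * hQIpsd.1.eigenvalues i) with hD1def
  have hD0ge1 : (1 : ℝ) ≤ D0 := by
    calc (1 : ℝ) = ∏ _i : Fin d, (1 : ℝ) := by simp
      _ ≤ D0 := by
          apply Finset.prod_le_prod
          · intro i _; norm_num
          · intro i _
            have := hQS.eigenvalues_nonneg i
            nlinarith
  have hD1ge1 : (1 : ℝ) ≤ D1 := by
    calc (1 : ℝ) = ∏ _i : Fin d, (1 : ℝ) := by simp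
      _ ≤ D1 := by
          apply Finset.prod_le_prod
          · intro i _; norm_num
          · intro i _
            have := hQIpsd.eigenvalues_nonneg i
            nlinarith
  have hD1le : D1 ≤ (1 + c * s) ^ d := by
    calc D1 ≤ ∏ _i : Fin d, (1 + c * s) := by
          apply Finset.prod_le_prod
          · intro i _
            have := hQIpsd.eigenvalues_nonneg i
            nlinarith
          · intro i _
            have := heigQI i
            nlinarith
      _ = (1 + c * s) ^ d := by
          rw [Finset.prod_const, Finset.card_univ, Fintype.card_fin]
  -- determinant comparison
  have hApos : (1 + (c : ℂ) • QS).PosDef :=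
    Matrix.PosDef.add_posSemidef Matrix.PosDef.one (psd_real_smul hQS hc.le)
  have hBpsd : ((c : ℂ) • QI).PosSemidef := psd_real_smul hQIpsd hc.le
  have hcmp : ‖(1 + (c : ℂ) • QS).det‖
      ≤ ‖(1 + (c : ℂ) • (QS + QI)).det‖ := by
    have h := abs_det_le_abs_det_add_psd hApos hBpsd
    have heq : 1 + (c : ℂ) • QS + (c : ℂ) • QI = 1 + (c : ℂ) • (QS + QI) := by
      rw [smul_add, add_assoc]
    rwa [heq] at h
  -- absolute values
  have habs0 : ‖(1 + (c : ℂ) • QS).det‖ = D0 := by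
    rw [hdetS, Complex.norm_real, Real.norm_eq_abs, abs_of_nonneg (by linarith)]
  have habs1 : ‖(1 + (c : ℂ) • QI).det‖ = D1 := by
    rw [hdetI, Complex.norm_real, Real.norm_eq_abs, abs_of_nonneg (by linarith)]
  -- logs
  have hlog2 : Real.log ‖(1 + (c : ℂ) • (QS + QI)).det‖
      ≥ Real.log ‖(1 + (c : ℂ) • QS).det‖ := by
    apply Real.log_le_log _ hcmp
    rw [habs0]; linarith
  have hlog1 : Real.log ‖(1 + (c : ℂ) • QI).det‖
      ≤ (d : ℝ) * Real.log (1 + c * s) := by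
    rw [habs1, ← Real.log_pow]
    apply Real.log_le_log _ hD1le
    linarith
  have hgoal : 1 + 2 * (P / d) * chordalDistSq Fhat F = 1 + c * s := by
    rw [hs, hcdef]; ring
  rw [hgoal]
  linarith
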